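/- arXiv:1608.03116 — 6 statements merged into one kernel-verified Lean document; each statement's English description precedes it below -/
import Mathlib

section
/- A semigroup S is semilattice indecomposable if and only if S has no proper completely prime ideal. -/
universe u

/-- A semigroup is semilattice indecomposable if every semigroup homomorphism from it to a
semilattice (a commutative idempotent semigroup) is constant. -/
def SemilatticeIndecomposable (S : Type u) [Semigroup S] : Prop :=
  ∀ (T : Type u) [Semigroup T],
    (∀ a b : T, a * b = b * a) → (∀ a : T, a * a = a) →
      ∀ f : S →ₙ* T, ∀ x y : S, f x = f y

/-- An ideal of a semigroup: a nonempty subset closed under left and right multiplication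
by arbitrary elements. -/
def IsIdeal {S : Type u} [Mul S] (I : Set S) : Prop :=
  I.Nonempty ∧ ∀ a ∈ I, ∀ s : S, s * a ∈ I ∧ a * s ∈ I

/-- An ideal is completely prime if its complement is closed under multiplication. -/
def IsCompletelyPrime {S : Type u} [Mul S] (I : Set S) : Prop :=
  ∀ a b : S, a ∉ I → b ∉ I → a * b ∉ I

/-- The two-element semilattice (as `ULift Prop`) with conjunction. -/
def propSemigroup : Semigroup (ULift.{u} Prop) where
  mul p q := ULift.up (p.down ∧ q.down)
  mul_assoc _ _ _ := congrArg ULift.up (propext and_assoc)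

lemma key_absorb {T : Type u} [Semigroup T]
    (hc : ∀ a b : T, a * b = b * a) (hi : ∀ a : T, a * a = a)
    (p q r : T) (h : p * q * r = r) : q * r = r := by
  calc q * r = q * (p * q * r) := by rw [h]
    _ = q * (p * (q * r)) := by rw [mul_assoc]
    _ = (q * p) * (q * r) := by rw [mul_assoc]
    _ = (p * q) * (q * r) := by rw [hc q p]
    _ = p * (q * (q * r)) := by rw [mul_assoc]
    _ = p * ((q * q) * r) := by rw [mul_assoc]
    _ = p * (q * r) := by rw [hi]
    _ = p * q * r := by rw [mul_assoc]
    _ = r := h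

lemma key_absorb' {T : Type u} [Semigroup T]
    (hc : ∀ a b : T, a * b = b * a) (hi : ∀ a : T, a * a = a)
    (p q r : T) (h : p * q * r = r) : p * r = r := by
  have h' : q * p * r = r := by rw [hc q p]; exact h
  exact key_absorb hc hi q p r h'

lemma aux_ideal {S T : Type u} [Semigroup S] [Semigroup T]
    (hc : ∀ a b : T, a * b = b * a) (hi : ∀ a : T, a * a = a)
    (f : S →ₙ* T) (t s : S) (hs : f s * f t ≠ f t) :
    ∃ I : Set S, IsIdeal I ∧ I ≠ Set.univ ∧ IsCompletelyPrime I := by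
  refine ⟨{u | f u * f t ≠ f t}, ⟨⟨s, hs⟩, ?_⟩, ?_, ?_⟩
  · intro a ha r
    constructor
    · intro h
      simp only [Set.mem_setOf_eq, map_mul] at h
      exact ha (key_absorb hc hi (f r) (f a) (f t) h)
    · intro h
      simp only [Set.mem_setOf_eq, map_mul] at h
      exact ha (key_absorb' hc hi (f a) (f r) (f t) h)
  · intro hI
    have : t ∈ {u | f u * f t ≠ f t} := hI ▸ Set.mem_univ t
    exact this (hi (f t))
  · intro a b ha hb
    simp only [Set.mem_setOf_eq, not_not] at ha hb ⊢
    rw [map_mul, mul_assoc, hb, ha]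

/-- A semigroup is semilattice indecomposable iff it has no proper completely prime ideal. -/
theorem stmt_0 {S : Type u} [Semigroup S] :
    SemilatticeIndecomposable S ↔
      ¬ ∃ I : Set S, IsIdeal I ∧ I ≠ Set.univ ∧ IsCompletelyPrime I := by
  constructor
  · rintro hind ⟨I, ⟨⟨a, ha⟩, hIdeal⟩, hproper, hcp⟩
    obtain ⟨b, hb⟩ : ∃ b, b ∉ I := by
      by_contra h
      push_neg at h
      exact hproper (Set.eq_univ_of_forall h)
    letI : Semigroup (ULift.{u} Prop) := propSemigroup
    have hmul : ∀ p q : ULift.{u} Prop, p * q = ULift.up (p.down ∧ q.down) := fun _ _ => rfl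
    have hc : ∀ p q : ULift.{u} Prop, p * q = q * p := by
      intro p q; rw [hmul, hmul]; exact congrArg ULift.up (propext and_comm)
    have hidem : ∀ p : ULift.{u} Prop, p * p = p := by
      intro p; rw [hmul]; exact congrArg ULift.up (propext and_self_iff)
    have hmap : ∀ x y : S, (ULift.up (x * y ∉ I) : ULift.{u} Prop)
        = ULift.up (x ∉ I) * ULift.up (y ∉ I) := by
      intro x y
      rw [hmul]
      exact congrArg ULift.up (propext ⟨fun h => ⟨fun hx => h ((hIdeal x hx y).2),
        fun hy => h ((hIdeal y hy x).1)⟩, fun ⟨hx, hy⟩ => hcp x y hx hy⟩)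
    have heq := hind (ULift.{u} Prop) hc hidem
      ⟨fun x => ULift.up (x ∉ I), fun {x y} => hmap x y⟩ a b
    have h2 : (a ∉ I) = (b ∉ I) := congrArg ULift.down heq
    exact (h2 ▸ hb : a ∉ I) ha
  · intro hno T _ hc hi f x y
    by_contra hxy
    apply hno
    by_cases h : f y * f x = f x
    · refine aux_ideal hc hi f y x (fun hx => hxy ?_)
      calc f x = f y * f x := h.symm
        _ = f x * f y := hc _ _
        _ = f y := hx
    · exact aux_ideal hc hi f x y h
end

section
/- A semigroup S is semilattice indecomposable if and only if for all a, b ∈ S there exists a finite sequence a = a₀, a₁, …, aₙ = b of elements of S such that for each i = 1, …, n, the element a_{i-1} divides some positive power of a_i (i.e., some power of a_i lies in the two-sided principal ideal generated by a_{i-1}, meaning a_i^k ∈ S¹a_{i-1}S¹ for some k ≥ 1). -/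
universe u

/-- `spow a n` is the power `a^(n+1)` in a semigroup (so every `spow a n` is a positive power). -/
def spow {S : Type u} [Semigroup S] (a : S) : ℕ → S
  | 0 => a
  | n + 1 => spow a n * a

/-- `DividesPower a b` means `a` divides some positive power of `b`, i.e. some positive power
of `b` lies in `S¹aS¹ = {a} ∪ aS ∪ Sa ∪ SaS`. -/
def DividesPower {S : Type u} [Semigroup S] (a b : S) : Prop :=
  ∃ k : ℕ, spow b k = a ∨ (∃ s : S, spow b k = a * s) ∨ (∃ s : S, spow b k = s * a) ∨
    (∃ s t : S, spow b k = s * a * t)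

namespace SLProof

variable {S : Type u} [Semigroup S]

/-- Reachability: reflexive transitive closure of `DividesPower`. -/
abbrev Reach {S : Type u} [Semigroup S] : S → S → Prop :=
  Relation.ReflTransGen DividesPower

lemma dp_left (a b : S) : DividesPower a (a * b) :=
  ⟨0, Or.inr (Or.inl ⟨b, rfl⟩)⟩

lemma dp_right (a b : S) : DividesPower b (a * b) :=
  ⟨0, Or.inr (Or.inr (Or.inl ⟨a, rfl⟩))⟩

lemma dp_rot (a b : S) : DividesPower (a * b) (b * a) :=
  ⟨1, Or.inr (Or.inr (Or.inr ⟨b, a, by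
    show (b * a) * (b * a) = b * (a * b) * a
    simp only [mul_assoc]⟩))⟩

lemma dp_sq (z : S) : DividesPower (z * z) z := ⟨1, Or.inl rfl⟩

/-- `b·c·bᵏ⁺¹ →* b·c`. -/
lemma reach_aux (b c : S) (k : ℕ) : Reach (b * c * spow b k) (b * c) := by
  induction k with
  | zero =>
    refine Relation.ReflTransGen.single ⟨1, Or.inr (Or.inl ⟨c, ?_⟩)⟩
    show (b * c) * (b * c) = b * c * spow b 0 * c
    show (b * c) * (b * c) = b * c * b * c
    simp only [mul_assoc]
  | succ k ih =>
    refine Relation.ReflTransGen.head ⟨1, Or.inr (Or.inl ⟨c * spow b k, ?_⟩)⟩ ih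
    show (b * c * spow b k) * (b * c * spow b k)
        = b * c * (spow b k * b) * (c * spow b k)
    simp only [mul_assoc]

/-- `bᵏ⁺¹·c →* b·c`. -/
lemma reach_pow_mul (b c : S) (k : ℕ) : Reach (spow b k * c) (b * c) := by
  cases k with
  | zero => exact Relation.ReflTransGen.refl
  | succ k =>
    refine Relation.ReflTransGen.head
      ⟨1, Or.inr (Or.inr (Or.inr ⟨b * c, spow b k, ?_⟩))⟩ (reach_aux b c k)
    show (b * c * spow b k) * (b * c * spow b k)
        = (b * c) * ((spow b k * b) * c) * spow b k
    simp only [mul_assoc]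

/-- One-step right monotonicity: if `a` divides a power of `b`, then `a*c →* b*c`. -/
lemma mono_right_step {a b : S} (c : S) (h : DividesPower a b) : Reach (a * c) (b * c) := by
  obtain ⟨k, h⟩ := h
  rcases h with h | ⟨s, h⟩ | ⟨s, h⟩ | ⟨s, t, h⟩
  · exact h ▸ reach_pow_mul b c k
  · -- spow b k = a * s
    refine Relation.ReflTransGen.head (dp_rot a c) ?_
    refine Relation.ReflTransGen.head
      ⟨1, Or.inr (Or.inr (Or.inr ⟨a * s, s * c, ?_⟩))⟩ (reach_pow_mul b c k)
    rw [h]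
    show ((a * s) * c) * ((a * s) * c) = (a * s) * (c * a) * (s * c)
    simp only [mul_assoc]
  · -- spow b k = s * a
    refine Relation.ReflTransGen.head
      ⟨0, Or.inr (Or.inr (Or.inl ⟨s, ?_⟩))⟩ (reach_pow_mul b c k)
    rw [h]
    show (s * a) * c = s * (a * c)
    simp only [mul_assoc]
  · -- spow b k = s * a * t
    have s2 : DividesPower (c * a) (a * (t * c)) := by
      refine ⟨1, Or.inr (Or.inr (Or.inr ⟨a * t, t * c, ?_⟩))⟩
      show (a * (t * c)) * (a * (t * c)) = (a * t) * (c * a) * (t * c)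
      simp only [mul_assoc]
    have s3 : DividesPower (a * (t * c)) (spow b k * c) := by
      refine ⟨0, Or.inr (Or.inr (Or.inl ⟨s, ?_⟩))⟩
      rw [h]
      show (s * a * t) * c = s * (a * (t * c))
      simp only [mul_assoc]
    exact Relation.ReflTransGen.head (dp_rot a c)
      (Relation.ReflTransGen.head s2
        (Relation.ReflTransGen.head s3 (reach_pow_mul b c k)))

lemma mono_right {a b : S} (c : S) (h : Reach a b) : Reach (a * c) (b * c) := by
  induction h with
  | refl => exact Relation.ReflTransGen.refl
  | tail _ h2 ih => exact ih.trans (mono_right_step c h2)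

lemma mono_left {a b : S} (c : S) (h : Reach a b) : Reach (c * a) (c * b) :=
  (Relation.ReflTransGen.single (dp_rot c a)).trans
    ((mono_right c h).trans (Relation.ReflTransGen.single (dp_rot b c)))

/-- The filter property: if both `x` and `y` reach `z`, so does `x*y`. -/
lemma reach_mul {x y z : S} (hx : Reach x z) (hy : Reach y z) : Reach (x * y) z :=
  (mono_right y hx).trans
    ((mono_left z hy).trans (Relation.ReflTransGen.single (dp_sq z)))

lemma chain_to_reach : ∀ (n : ℕ) (c : ℕ → S),
    (∀ i < n, DividesPower (c i) (c (i + 1))) → Reach (c 0) (c n) := by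
  intro n
  induction n with
  | zero => intro c _; exact Relation.ReflTransGen.refl
  | succ n ih =>
    intro c hc
    exact (ih c (fun i hi => hc i (by omega))).tail (hc n (by omega))

lemma reach_to_chain {a b : S} (h : Reach a b) :
    ∃ n : ℕ, ∃ c : ℕ → S, c 0 = a ∧ c n = b ∧
      ∀ i < n, DividesPower (c i) (c (i + 1)) := by
  induction h with
  | refl => exact ⟨0, fun _ => a, rfl, rfl, fun i hi => absurd hi (by omega)⟩
  | @tail b' b _ h2 ih =>
    obtain ⟨n, c, h0, hn, hs⟩ := ih
    refine ⟨n + 1, fun i => if i ≤ n then c i else b, by simp [h0], by simp, ?_⟩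
    intro i hi
    by_cases hin : i < n
    · have h1 : i ≤ n := le_of_lt hin
      have h2' : i + 1 ≤ n := hin
      simp only [if_pos h1, if_pos h2']
      exact hs i hin
    · have hieq : i = n := by omega
      subst hieq
      simp only [le_refl, if_pos, if_neg (by omega : ¬ i + 1 ≤ i)]
      rw [hn]
      exact h2

section Semilattice

variable {T : Type u} [Semigroup T]

lemma spow_idem (hid : ∀ t : T, t * t = t) (t : T) (k : ℕ) : spow t k = t := by
  induction k with
  | zero => rfl
  | succ k ih => show spow t k * t = t; rw [ih, hid]

lemma map_spow (f : S →ₙ* T) (b : S) (k : ℕ) : f (spow b k) = spow (f b) k := by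
  induction k with
  | zero => rfl
  | succ k ih => show f (spow b k * b) = spow (f b) k * f b; rw [map_mul, ih]

lemma absorb (hc : ∀ p q : T, p * q = q * p) (hid : ∀ t : T, t * t = t)
    (f : S →ₙ* T) {a b : S} (h : DividesPower a b) : f b * f a = f b := by
  obtain ⟨k, h⟩ := h
  have hpow : f (spow b k) = f b := by rw [map_spow, spow_idem hid]
  rcases h with h | ⟨s, h⟩ | ⟨s, h⟩ | ⟨s, t, h⟩
  · have ha : f a = f b := by rw [← h, hpow]
    rw [ha, hid]
  · have hb : f b = f a * f s := by rw [← hpow, ← map_mul, h]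
    rw [hb, mul_assoc, hc (f s) (f a), ← mul_assoc, hid]
  · have hb : f b = f s * f a := by rw [← hpow, ← map_mul, h]
    rw [hb, mul_assoc, hid]
  · have hb : f b = f s * f a * f t := by rw [← hpow, ← map_mul, ← map_mul, h]
    rw [hb, mul_assoc (f s * f a), hc (f t) (f a), ← mul_assoc, mul_assoc (f s), hid]

lemma reach_absorb (hc : ∀ p q : T, p * q = q * p) (hid : ∀ t : T, t * t = t)
    (f : S →ₙ* T) {a b : S} (h : Reach a b) : f b * f a = f b := by
  induction h with
  | refl => exact hid _
  | @tail b' b _ h2 ih =>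
    have e := absorb hc hid f h2
    calc f b * f a = (f b * f b') * f a := by rw [e]
      _ = f b * (f b' * f a) := mul_assoc _ _ _
      _ = f b * f b' := by rw [ih]
      _ = f b := e

end Semilattice

end SLProof

open SLProof in
/-- A semigroup is semilattice indecomposable iff any two elements are connected by a chain
in which each element divides some positive power of the next. -/
theorem stmt_1 {S : Type u} [Semigroup S] :
    SemilatticeIndecomposable S ↔
      ∀ a b : S, ∃ n : ℕ, ∃ c : ℕ → S, c 0 = a ∧ c n = b ∧
        ∀ i < n, DividesPower (c i) (c (i + 1)) := by
  constructor
  · intro hInd a b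
    apply reach_to_chain
    by_contra hnr
    letI : Mul (Set S) := ⟨fun p q => p ∩ q⟩
    letI : Semigroup (Set S) :=
      { mul_assoc := fun p q r => Set.inter_assoc p q r }
    let f : S →ₙ* Set S :=
      { toFun := fun u => {z | Reach u z}
        map_mul' := by
          intro u v
          show {z | Reach (u * v) z} = {z | Reach u z} ∩ {z | Reach v z}
          ext w
          simp only [Set.mem_inter_iff, Set.mem_setOf_eq]
          constructor
          · intro h
            exact ⟨(Relation.ReflTransGen.single (dp_left u v)).trans h,
              (Relation.ReflTransGen.single (dp_right u v)).trans h⟩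
          · rintro ⟨h1, h2⟩
            exact reach_mul h1 h2 }
    have heq : f a = f b :=
      hInd (Set S) (fun p q => show p * q = q * p from Set.inter_comm p q)
        (fun p => show p * p = p from Set.inter_self p) f a b
    have hb : b ∈ f b := show Reach b b from Relation.ReflTransGen.refl
    rw [← heq] at hb
    exact hnr hb
  · intro h T _ hcomm hidem f x y
    have hr : ∀ a b : S, Reach a b := by
      intro a b
      obtain ⟨n, c, h0, hn, hs⟩ := h a b
      have := chain_to_reach n c hs
      rwa [h0, hn] at this
    have h1 := reach_absorb hcomm hidem f (hr x y)
    have h2 := reach_absorb hcomm hidem f (hr y x)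
    calc f x = f x * f y := h2.symm
      _ = f y * f x := hcomm _ _
      _ = f y := h1
end

section
/- Let A and B be semigroups with zero elements z_A and z_B, and let A ×₀ B denote the Rees quotient of the direct product A × B by the ideal I = ({z_A} × B) ∪ (A × {z_B}). Then A ×₀ B is semilattice indecomposable if and only if A is semilattice indecomposable or B is semilattice indecomposable. -/
universe u

def ZProd (A B : Type u) [Zero A] [Zero B] : Type u :=
  Option {p : A × B // p.1 ≠ 0 ∧ p.2 ≠ 0}

variable {A B : Type u} [SemigroupWithZero A] [SemigroupWithZero B]

open Classical in
noncomputable def zmul : ZProd A B → ZProd A B → ZProd A B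
  | some p, some q =>
      if h : p.val.1 * q.val.1 ≠ 0 ∧ p.val.2 * q.val.2 ≠ 0 then
        some ⟨(p.val.1 * q.val.1, p.val.2 * q.val.2), h⟩
      else none
  | _, _ => none

theorem zmul_none_left (x : ZProd A B) : zmul none x = none := by cases x <;> rfl
theorem zmul_none_right (x : ZProd A B) : zmul x none = none := by cases x <;> rfl

open Classical in
theorem zmul_assoc (x y z : ZProd A B) : zmul (zmul x y) z = zmul x (zmul y z) := by
  rcases x with _ | p <;> rcases y with _ | q <;> rcases z with _ | r <;>
    (try simp only [zmul_none_left, zmul_none_right]) <;> try rfl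
  have key : ∀ p q : {p : A × B // p.1 ≠ 0 ∧ p.2 ≠ 0}, zmul (some p : ZProd A B) (some q) =
      if h : p.val.1 * q.val.1 ≠ 0 ∧ p.val.2 * q.val.2 ≠ 0 then
        (some ⟨(p.val.1 * q.val.1, p.val.2 * q.val.2), h⟩ : ZProd A B) else none :=
    fun _ _ => rfl
  by_cases h1 : p.val.1 * q.val.1 ≠ 0 ∧ p.val.2 * q.val.2 ≠ 0 <;>
    by_cases h2 : q.val.1 * r.val.1 ≠ 0 ∧ q.val.2 * r.val.2 ≠ 0
  · rw [key p q, key q r, dif_pos h1, dif_pos h2, key, key]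
    split_ifs with h3 h4
    · exact congrArg some (Subtype.ext (by simp [mul_assoc]))
    · exact absurd ⟨by rw [← mul_assoc]; exact h3.1, by rw [← mul_assoc]; exact h3.2⟩ h4
    · exact absurd ⟨by rw [mul_assoc]; exact (by assumption : _ ∧ _).1,
        by rw [mul_assoc]; exact (by assumption : _ ∧ _).2⟩ h3
    · rfl
  · rw [key p q, key q r, dif_pos h1, dif_neg h2, key]
    rw [dif_neg]
    · rfl
    rcases not_and_or.mp h2 with h2 | h2 <;> push_neg at h2 <;> intro h
    · exact h.1 (by rw [mul_assoc, h2, mul_zero])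
    · exact h.2 (by rw [mul_assoc, h2, mul_zero])
  · rw [key p q, key q r, dif_neg h1, dif_pos h2, key]
    rw [dif_neg]
    · rfl
    rcases not_and_or.mp h1 with h1 | h1 <;> push_neg at h1 <;> intro h
    · exact h.1 (by rw [← mul_assoc, h1, zero_mul])
    · exact h.2 (by rw [← mul_assoc, h1, zero_mul])
  · rw [key p q, key q r, dif_neg h1, dif_neg h2]
    rfl

noncomputable instance : SemigroupWithZero (ZProd A B) where
  zero := none
  mul := zmul
  zero_mul := zmul_none_left
  mul_zero := zmul_none_right
  mul_assoc := zmul_assoc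

/-! ### Auxiliary machinery -/

def BSL : Type u := ULift Bool

instance : Semigroup BSL.{u} where
  mul a b := ⟨a.down && b.down⟩
  mul_assoc a b c := congrArg ULift.up (Bool.and_assoc a.down b.down c.down)

theorem BSL_comm : ∀ a b : BSL.{u}, a * b = b * a := fun a b =>
  congrArg ULift.up (Bool.and_comm _ _)

theorem BSL_idem : ∀ a : BSL.{u}, a * a = a := fun a =>
  congrArg ULift.up (Bool.and_self _)

def IsBoolHom {S : Type u} [Semigroup S] (g : S → Bool) : Prop :=
  ∀ x y : S, g (x * y) = (g x && g y)

theorem not_indec_of_boolHom {S : Type u} [Semigroup S] {g : S → Bool} (hg : IsBoolHom g)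
    {x y : S} (hxy : g x ≠ g y) : ¬ SemilatticeIndecomposable S := fun h => by
  have := h BSL BSL_comm BSL_idem ⟨fun s => ⟨g s⟩, fun a b => congrArg ULift.up (hg a b)⟩ x y
  exact hxy (congrArg ULift.down this)

open Classical in
theorem boolHom_of_not_indec {S : Type u} [Semigroup S] (h : ¬ SemilatticeIndecomposable S) :
    ∃ g : S → Bool, IsBoolHom g ∧ ∃ x y : S, g x ≠ g y := by
  simp only [SemilatticeIndecomposable, not_forall] at h
  obtain ⟨T, _inst, h⟩ := h
  push_neg at h
  obtain ⟨hc, hi, f, x, y, hxy⟩ := h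
  have key : ∀ t u v : T, t * (u * v) = t ↔ (t * u = t ∧ t * v = t) := by
    intro t u v
    constructor
    · intro H
      constructor
      · calc t * u = (t * (u * v)) * u := by rw [H]
          _ = t * (u * (v * u)) := by rw [mul_assoc, mul_assoc]
          _ = t * (u * (u * v)) := by rw [hc v u]
          _ = t * ((u * u) * v) := by rw [← mul_assoc u u v]
          _ = t * (u * v) := by rw [hi u]
          _ = t := H
      · calc t * v = (t * (u * v)) * v := by rw [H]
          _ = t * ((u * v) * v) := by rw [mul_assoc]
          _ = t * (u * (v * v)) := by rw [mul_assoc u v v]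
          _ = t * (u * v) := by rw [hi v]
          _ = t := H
    · rintro ⟨h1, h2⟩
      calc t * (u * v) = (t * u) * v := (mul_assoc _ _ _).symm
        _ = t * v := by rw [h1]
        _ = t := h2
  have hom : ∀ t : T, IsBoolHom (fun s => decide (t * f s = t)) := by
    intro t a b
    have hk := key t (f a) (f b)
    by_cases h1 : t * f a = t <;> by_cases h2 : t * f b = t <;>
      simp [map_mul, h1, h2, hk]
  by_cases hxy2 : f x * f y = f x
  · refine ⟨fun s => decide (f y * f s = f y), hom (f y), x, y, ?_⟩
    have hyy : decide (f y * f y = f y) = true := decide_eq_true (hi (f y))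
    simp only [hyy]
    intro heq
    have hyx : f y * f x = f y := of_decide_eq_true heq
    exact hxy (by rw [← hxy2, hc (f x) (f y), hyx])
  · refine ⟨fun s => decide (f x * f s = f x), hom (f x), x, y, ?_⟩
    have hxx : decide (f x * f x = f x) = true := decide_eq_true (hi (f x))
    simp [hxx, hxy2]

theorem boolHom_prime {A B : Type u} [Semigroup A] [Semigroup B] {G : A → B → Bool}
    (H : ∀ a a' b b', G (a * a') (b * b') = (G a b && G a' b'))
    {x x' : A} {y y' : B} (h : G (x * x') (y * y') = true) :
    G x y = true ∧ G x' y' = true := by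
  rw [H] at h
  exact Bool.and_eq_true_iff.mp h

theorem sandwich {A B : Type u} [Semigroup A] [Semigroup B] {G : A → B → Bool}
    (H : ∀ a a' b b', G (a * a') (b * b') = (G a b && G a' b'))
    {a d : A} {c b : B} (hac : G a c = true) (hdb : G d b = true) : G a b = true := by
  have s1 : G (a * (d * a)) ((c * b) * c) = true := by
    have : G ((a * d) * a) ((c * b) * c) = true := by simp [H, hac, hdb]
    rwa [mul_assoc a d a] at this
  have t1 : G a (c * b) = true := (boolHom_prime H s1).1
  have s2 : G ((d * a) * d) (b * (c * b)) = true := by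
    have : G ((d * a) * d) ((b * c) * b) = true := by simp [H, hac, hdb]
    rwa [mul_assoc b c b] at this
  have t2 : G (d * a) b = true := (boolHom_prime H s2).1
  have s3 : G ((a * d) * a) ((c * b) * b) = true := by
    have : G (a * (d * a)) ((c * b) * b) = true := by simp [H, t1, t2]
    rwa [← mul_assoc a d a] at this
  exact (boolHom_prime H s3).2

theorem filter_fst {A B : Type u} [Semigroup A] [Semigroup B] {G : A → B → Bool}
    (H : ∀ a a' b b', G (a * a') (b * b') = (G a b && G a' b'))
    {a₀ : A} {b₀ : B} (hp : G a₀ b₀ = true) (a a' : A) :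
    G (a * a') b₀ = (G a b₀ && G a' b₀) := by
  by_cases h1 : G (a * a') b₀ = true
  · have haa : G ((a * a') * (a * a')) (b₀ * b₀) = true := by simp [H, h1]
    have ha : G a b₀ = true := by
      rw [mul_assoc a a' (a * a')] at haa
      exact (boolHom_prime H haa).1
    have ha' : G a' b₀ = true := by
      have hc3 : G (((a * a') * (a * a')) * (a * a')) ((b₀ * b₀) * b₀) = true := by
        simp [H, h1]
      have hc4 : G ((((a * a') * (a * a')) * a) * a') ((b₀ * b₀) * b₀) = true := by
        rw [mul_assoc ((a * a') * (a * a')) a a']; exact hc3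
      exact (boolHom_prime H hc4).2
    rw [h1, ha, ha']
    rfl
  · have hf : G (a * a') b₀ = false := by revert h1; cases G (a * a') b₀ <;> simp
    rw [hf]
    by_contra hcon
    have hb : (G a b₀ && G a' b₀) = true := by
      revert hcon; cases hA : G a b₀ <;> cases hA' : G a' b₀ <;> simp
    have h2 : G (a * a') (b₀ * b₀) = true := by rw [H]; exact hb
    have := sandwich H h2 hp
    rw [hf] at this
    cases this

theorem boolHom_zero {S : Type u} [SemigroupWithZero S] {g : S → Bool}
    (hg : IsBoolHom g) {x y : S} (hxy : g x ≠ g y) : g 0 = false := by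
  by_contra hcon
  have h0 : g 0 = true := by revert hcon; cases g (0 : S) <;> simp
  have hall : ∀ z : S, g z = true := by
    intro z
    have h1 := hg 0 z
    rw [zero_mul, h0] at h1
    have h1 : true = (true && g z) := h1
    revert h1; cases g z <;> simp
  exact hxy ((hall x).trans (hall y).symm)

theorem zprod_zero_def : (0 : ZProd A B) = none := rfl

open Classical in
noncomputable def zmk (a : A) (b : B) : ZProd A B :=
  if h : a ≠ 0 ∧ b ≠ 0 then some ⟨(a, b), h⟩ else none

theorem zmk_of (p : {p : A × B // p.1 ≠ 0 ∧ p.2 ≠ 0}) :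
    zmk p.val.1 p.val.2 = some p := dif_pos p.2

theorem zmk_zero_left (b : B) : zmk (0 : A) b = none := dif_neg (by simp)
theorem zmk_zero_right (a : A) : zmk a (0 : B) = none := dif_neg (by simp)

theorem zmk_mul (a a' : A) (b b' : B) :
    zmk a b * zmk a' b' = zmk (a * a') (b * b') := by
  show zmul (zmk a b) (zmk a' b') = zmk (a * a') (b * b')
  unfold zmk
  by_cases h1 : a ≠ 0 ∧ b ≠ 0 <;> by_cases h2 : a' ≠ 0 ∧ b' ≠ 0
  · erw [dif_pos h1, dif_pos h2]
    rfl
  · erw [dif_pos h1, dif_neg h2, zmul_none_right, eq_comm, dif_neg]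
    rcases not_and_or.mp h2 with h | h <;> push_neg at h <;> intro hcon
    · exact hcon.1 (by rw [h, mul_zero])
    · exact hcon.2 (by rw [h, mul_zero])
  · erw [dif_neg h1, dif_pos h2, zmul_none_left, eq_comm, dif_neg]
    rcases not_and_or.mp h1 with h | h <;> push_neg at h <;> intro hcon
    · exact hcon.1 (by rw [h, zero_mul])
    · exact hcon.2 (by rw [h, zero_mul])
  · erw [dif_neg h1, dif_neg h2, zmul_none_left, eq_comm, dif_neg]
    rcases not_and_or.mp h1 with h | h <;> push_neg at h <;> intro hcon
    · exact hcon.1 (by rw [h, zero_mul])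
    · exact hcon.2 (by rw [h, zero_mul])

/-- The indicator built from indicators on the factors. -/
def zg (gA : A → Bool) (gB : B → Bool) : ZProd A B → Bool :=
  fun z => z.elim false fun p => gA p.val.1 && gB p.val.2

theorem zprod_mul_def (x y : ZProd A B) : x * y = zmul x y := rfl

theorem zg_hom {gA : A → Bool} {gB : B → Bool} (hgA : IsBoolHom gA) (hgB : IsBoolHom gB)
    (hA0 : gA 0 = false) (hB0 : gB 0 = false) : IsBoolHom (zg gA gB) := by
  intro u v
  rw [zprod_mul_def]
  cases u with
  | none =>
    rw [zmul_none_left]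
    show false = (false && _)
    simp
  | some pu =>
    cases v with
    | none =>
      erw [zmul_none_right]
      show false = (_ && false)
      simp
    | some qv =>
      classical
      change zg gA gB (if h : pu.val.1 * qv.val.1 ≠ 0 ∧ pu.val.2 * qv.val.2 ≠ 0 then
        (some ⟨(pu.val.1 * qv.val.1, pu.val.2 * qv.val.2), h⟩ : ZProd A B) else none) = _
      by_cases hc : pu.val.1 * qv.val.1 ≠ 0 ∧ pu.val.2 * qv.val.2 ≠ 0
      · erw [dif_pos hc]
        show (gA (pu.val.1 * qv.val.1) && gB (pu.val.2 * qv.val.2)) = _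
        rw [hgA, hgB]
        show _ = ((gA pu.val.1 && gB pu.val.2) && (gA qv.val.1 && gB qv.val.2))
        cases gA pu.val.1 <;> cases gB pu.val.2 <;> cases gA qv.val.1 <;>
          cases gB qv.val.2 <;> rfl
      · erw [dif_neg hc]
        show false = ((gA pu.val.1 && gB pu.val.2) && (gA qv.val.1 && gB qv.val.2))
        rcases not_and_or.mp hc with h | h <;> push_neg at h
        · have hfa : (gA pu.val.1 && gA qv.val.1) = false := by rw [← hgA, h, hA0]
          revert hfa
          cases gA pu.val.1 <;> cases gA qv.val.1 <;> cases gB pu.val.2 <;>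
            cases gB qv.val.2 <;> simp
        · have hfb : (gB pu.val.2 && gB qv.val.2) = false := by rw [← hgB, h, hB0]
          revert hfb
          cases gA pu.val.1 <;> cases gA qv.val.1 <;> cases gB pu.val.2 <;>
            cases gB qv.val.2 <;> simp

theorem boolHom_true_exists {S : Type u} [Semigroup S] {g : S → Bool} {x y : S}
    (hxy : g x ≠ g y) : ∃ s : S, g s = true := by
  cases hx : g x with
  | true => exact ⟨x, hx⟩
  | false => exact ⟨y, by rw [hx] at hxy; revert hxy; cases g y <;> simp⟩

/-- `A ×₀ B` is semilattice indecomposable iff `A` or `B` is. -/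
theorem stmt_3 : SemilatticeIndecomposable (ZProd A B) ↔
    SemilatticeIndecomposable A ∨ SemilatticeIndecomposable B := by
  rw [← not_iff_not, not_or]
  constructor
  · intro h
    obtain ⟨g, hg, x, y, hxy⟩ := boolHom_of_not_indec h
    have h0 : g 0 = false := boolHom_zero hg hxy
    obtain ⟨z, hz⟩ := boolHom_true_exists hxy
    have hzp : ∃ p : {p : A × B // p.1 ≠ 0 ∧ p.2 ≠ 0}, g (some p) = true := by
      cases z with
      | none =>
        rw [← zprod_zero_def, h0] at hz
        cases hz
      | some p => exact ⟨p, hz⟩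
    obtain ⟨p, hp0⟩ := hzp
    have H : ∀ (a a' : A) (b b' : B),
        g (zmk (a * a') (b * b')) = (g (zmk a b) && g (zmk a' b')) := by
      intro a a' b b'
      rw [← zmk_mul]
      exact hg _ _
    have hp : g (zmk p.val.1 p.val.2) = true := by rw [zmk_of]; exact hp0
    constructor
    · have hGA : IsBoolHom (fun a => g (zmk a p.val.2)) := fun a a' =>
        filter_fst (G := fun a b => g (zmk a b)) H hp a a'
      refine not_indec_of_boolHom hGA (x := p.val.1) (y := 0) ?_
      show g (zmk p.val.1 p.val.2) ≠ g (zmk (0 : A) p.val.2)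
      rw [hp, zmk_zero_left, ← zprod_zero_def, h0]
      simp
    · have H' : ∀ (b b' : B) (a a' : A),
          g (zmk (a * a') (b * b')) = (g (zmk a b) && g (zmk a' b')) :=
        fun b b' a a' => H a a' b b'
      have hGB : IsBoolHom (fun b => g (zmk p.val.1 b)) := fun b b' =>
        filter_fst (G := fun b a => g (zmk a b)) (fun b b' a a' => H a a' b b') hp b b'
      refine not_indec_of_boolHom hGB (x := p.val.2) (y := 0) ?_
      show g (zmk p.val.1 p.val.2) ≠ g (zmk p.val.1 (0 : B))
      rw [hp, zmk_zero_right, ← zprod_zero_def, h0]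
      simp
  · rintro ⟨hA, hB⟩
    obtain ⟨gA, hgA, x1, y1, hne1⟩ := boolHom_of_not_indec hA
    obtain ⟨gB, hgB, x2, y2, hne2⟩ := boolHom_of_not_indec hB
    have hA0 : gA 0 = false := boolHom_zero hgA hne1
    have hB0 : gB 0 = false := boolHom_zero hgB hne2
    obtain ⟨a1, ha1⟩ := boolHom_true_exists hne1
    obtain ⟨b1, hb1⟩ := boolHom_true_exists hne2
    have ha1n : a1 ≠ 0 := fun e => by rw [e, hA0] at ha1; cases ha1
    have hb1n : b1 ≠ 0 := fun e => by rw [e, hB0] at hb1; cases hb1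
    refine not_indec_of_boolHom (zg_hom hgA hgB hA0 hB0)
      (x := some ⟨(a1, b1), ⟨ha1n, hb1n⟩⟩) (y := none) ?_
    show (gA a1 && gB b1) ≠ false
    rw [ha1, hb1]
    simp
end

section
/- Every ideal of a semilattice indecomposable semigroup is itself a semilattice indecomposable semigroup. -/
universe u

/-- An ideal of a semigroup is a semigroup under the restricted multiplication. -/
def idealSemigroup {S : Type u} [Semigroup S] {I : Set S} (hI : IsIdeal I) :
    Semigroup I where
  mul a b := ⟨a.1 * b.1, (hI.2 a.1 a.2 b.1).2⟩
  mul_assoc a b c := Subtype.ext (mul_assoc a.1 b.1 c.1)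

/-- Every ideal of a semilattice indecomposable semigroup is itself semilattice
indecomposable. -/
theorem stmt_8 {S : Type u} [Semigroup S] (hS : SemilatticeIndecomposable S)
    {I : Set S} (hI : IsIdeal I) :
    @SemilatticeIndecomposable I (idealSemigroup hI) := by
  letI : Semigroup I := idealSemigroup hI
  intro T instT hcomm hidem f x y
  letI : Std.Commutative (α := T) (· * ·) := ⟨hcomm⟩
  letI : Std.Associative (α := T) (· * ·) := ⟨mul_assoc⟩
  have mR : ∀ {u : S}, u ∈ I → ∀ s : S, u * s ∈ I := fun hu s => (hI.2 _ hu s).2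
  have mL : ∀ {u : S}, u ∈ I → ∀ s : S, s * u ∈ I := fun hu s => (hI.2 _ hu s).1
  have hsplit : ∀ (u v : S) (hu : u ∈ I) (hv : v ∈ I) (huv : u * v ∈ I),
      f ⟨u * v, huv⟩ = f ⟨u, hu⟩ * f ⟨v, hv⟩ := fun u v hu hv huv =>
    map_mul f ⟨u, hu⟩ ⟨v, hv⟩
  have hcongr : ∀ {u v : S} (hu : u ∈ I) (hv : v ∈ I), u = v →
      f ⟨u, hu⟩ = f ⟨v, hv⟩ := by rintro u v hu hv rfl; rfl
  -- the key construction: for a ∈ I, the map s ↦ f ⟨a*s*a⟩ is a semigroup hom S → T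
  have hom : ∀ (a : S) (ha : a ∈ I) (s t : S),
      f ⟨a * (s * t) * a, mR (mR ha (s * t)) a⟩
        = f ⟨a * s * a, mR (mR ha s) a⟩ * f ⟨a * t * a, mR (mR ha t) a⟩ := by
    intro a ha s t
    set A := f ⟨a, ha⟩ with hA
    set P := f ⟨a * s, mR ha s⟩ with hP
    set Q := f ⟨t * a, mL ha t⟩ with hQ
    set R := f ⟨a * s * t, mR (mR ha s) t⟩ with hR
    set M : S := (a * s) * (t * a) with hM
    have hMI : M ∈ I := mR (mR ha s) (t * a)
    have hPQ : f ⟨M, hMI⟩ = P * Q := hsplit _ _ (mR ha s) (mL ha t) hMI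
    have h3 : M * M = (a * s * t) * (a * M) := by
      simp only [hM]; simp only [mul_assoc]
    have e1 : f ⟨M, hMI⟩ = R * (A * f ⟨M, hMI⟩) := by
      calc f ⟨M, hMI⟩ = f ⟨M * M, mR hMI M⟩ := by
              rw [hsplit _ _ hMI hMI, hidem]
        _ = f ⟨(a * s * t) * (a * M), mR (mR (mR ha s) t) (a * M)⟩ :=
              hcongr _ _ h3
        _ = R * (A * f ⟨M, hMI⟩) := by
              rw [hsplit _ _ (mR (mR ha s) t) (mL hMI a) _,
                hsplit _ _ ha hMI (mL hMI a)]
    have abs : P * Q * A = P * Q := by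
      rw [← hPQ]
      calc f ⟨M, hMI⟩ * A = R * (A * f ⟨M, hMI⟩) * A := by rw [← e1]
        _ = R * (A * A) * f ⟨M, hMI⟩ := by ac_rfl
        _ = R * (A * f ⟨M, hMI⟩) := by rw [hidem]; ac_rfl
        _ = f ⟨M, hMI⟩ := e1.symm
    have hL : f ⟨a * (s * t) * a, mR (mR ha (s * t)) a⟩ = f ⟨M, hMI⟩ := by
      apply hcongr
      simp only [hM]; simp only [mul_assoc]
    have hRs : f ⟨a * s * a, mR (mR ha s) a⟩ = P * A :=
      hsplit _ _ (mR ha s) ha _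
    have hRt : f ⟨a * t * a, mR (mR ha t) a⟩ = A * Q := by
      rw [hcongr (mR (mR ha t) a) (mL (mL ha t) a) (mul_assoc a t a)]
      exact hsplit _ _ ha (mL ha t) _
    have hfin : P * A * (A * Q) = P * Q :=
      calc P * A * (A * Q) = P * Q * (A * A) := by ac_rfl
        _ = P * Q * A := by rw [hidem]
        _ = P * Q := abs
    rw [hL, hRs, hRt, hPQ, hfin]
  -- apply indecomposability of S
  have main : ∀ (a : S) (ha : a ∈ I) (u v : S),
      f ⟨a * u * a, mR (mR ha u) a⟩ = f ⟨a * v * a, mR (mR ha v) a⟩ := by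
    intro a ha u v
    exact hS T hcomm hidem ⟨fun s => f ⟨a * s * a, mR (mR ha s) a⟩, hom a ha⟩ u v
  have habs : ∀ u v : I, f u = f u * f v := by
    intro u v
    have h1 := main u.1 u.2 u.1 v.1
    have h2 : f ⟨u.1 * u.1 * u.1, mR (mR u.2 u.1) u.1⟩ = f u := by
      rw [hsplit _ _ (mR u.2 u.1) u.2, hsplit _ _ u.2 u.2, hidem, hidem]
    have h3 : f ⟨u.1 * v.1 * u.1, mR (mR u.2 v.1) u.1⟩ = f u * f v * f u := by
      rw [hsplit _ _ (mR u.2 v.1) u.2, hsplit _ _ u.2 v.2]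
    calc f u = f u * f v * f u := by rw [← h3, ← h1, h2]
      _ = (f u * f u) * f v := by ac_rfl
      _ = f u * f v := by rw [hidem]
  calc f x = f x * f y := habs x y
    _ = f y * f x := hcomm _ _
    _ = f y := (habs y x).symm
end

section
/- Let S be a finite semilattice indecomposable semigroup with a zero element. If Y is a subsemilattice of S, then |Y| ≤ 2⌊(|S| − 1)/4⌋ + 1. -/
universe u

/-- A subsemilattice of a semigroup: a subsemigroup consisting of pairwise commuting
idempotents. -/
def IsSubsemilattice {S : Type u} [Mul S] (Y : Set S) : Prop :=
  (∀ a ∈ Y, ∀ b ∈ Y, a * b ∈ Y) ∧ (∀ a ∈ Y, a * a = a) ∧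
    (∀ a ∈ Y, ∀ b ∈ Y, a * b = b * a)

namespace Stmt10Aux

/-- A "good" subset: characteristic function is a hom to the 2-element semilattice. -/
def Good {S : Type u} [Semigroup S] (U : Set S) : Prop :=
  ∀ x y : S, x * y ∈ U ↔ (x ∈ U ∧ y ∈ U)

/-- In a semilattice-indecomposable semigroup, a good set containing some element contains
every element. -/
theorem good_mem {S : Type u} [Semigroup S] (hS : SemilatticeIndecomposable S)
    {U : Set S} (hU : Good U) {u : S} (hu : u ∈ U) (v : S) : v ∈ U := by
  letI inst : Semigroup (ULift.{u} Prop) :=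
    { mul := fun p q => ⟨p.down ∧ q.down⟩
      mul_assoc := fun p q r => ULift.ext _ _ (propext and_assoc) }
  have hcomm : ∀ a b : ULift.{u} Prop, a * b = b * a :=
    fun a b => ULift.ext _ _ (propext and_comm)
  have hidem : ∀ a : ULift.{u} Prop, a * a = a :=
    fun a => ULift.ext _ _ (propext and_self_iff)
  let f : S →ₙ* ULift.{u} Prop :=
    { toFun := fun s => ⟨s ∈ U⟩
      map_mul' := fun x y => ULift.ext _ _ (propext (hU x y)) }
  have h := hS (ULift.{u} Prop) hcomm hidem f v u
  have h2 : (v ∈ U) = (u ∈ U) := congrArg ULift.down h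
  exact h2 ▸ hu

variable {S : Type u} [Semigroup S]

/-- Right witnesses of an idempotent `e`. -/
def Wr (e : S) : Set S := {u | u ≠ e ∧ u * e = u ∧ ∃ c, c * u = e}

/-- Left witnesses of an idempotent `e`. -/
def Wl (e : S) : Set S := {u | u ≠ e ∧ e * u = u ∧ ∃ c, u * c = e}

/-- The group of units of a local monoid at `e`. -/
def Ge (e : S) : Set S :=
  {u | u * e = u ∧ e * u = u ∧ ∃ v, v * e = v ∧ e * v = v ∧ u * v = e ∧ v * u = e}

theorem e_mem_Ge {e : S} (he2 : e * e = e) : e ∈ Ge e :=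
  ⟨he2, he2, e, he2, he2, he2, he2⟩

theorem Ge_mul {e g h : S} (hg : g ∈ Ge e) (hh : h ∈ Ge e) : g * h ∈ Ge e := by
  obtain ⟨hg1, hg2, vg, hvg1, hvg2, hvg3, hvg4⟩ := hg
  obtain ⟨hh1, hh2, vh, hvh1, hvh2, hvh3, hvh4⟩ := hh
  refine ⟨?_, ?_, vh * vg, ?_, ?_, ?_, ?_⟩
  · rw [mul_assoc, hh1]
  · rw [← mul_assoc, hg2]
  · rw [mul_assoc, hvg1]
  · rw [← mul_assoc, hvh2]
  · calc (g * h) * (vh * vg) = g * ((h * vh) * vg) := by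
          rw [mul_assoc, ← mul_assoc h]
    _ = g * (e * vg) := by rw [hvh3]
    _ = g * vg := by rw [hvg2]
    _ = e := hvg3
  · calc (vh * vg) * (g * h) = vh * ((vg * g) * h) := by
          rw [mul_assoc, ← mul_assoc vg]
    _ = vh * (e * h) := by rw [hvg4]
    _ = vh * h := by rw [hh2]
    _ = e := hvh4

/-- Key existence lemma: for an idempotent `e ≠ z` in an indecomposable semigroup with zero,
there is a right witness outside the unit group. -/
theorem exists_Wr (hS : SemilatticeIndecomposable S)
    {z : S} (hz : ∀ x : S, z * x = z ∧ x * z = z)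
    {e : S} (he2 : e * e = e) (hez : e ≠ z) :
    ∃ u, u ∈ Wr e ∧ u ∉ Ge e := by
  by_contra hcon
  push_neg at hcon
  have hU : Good {s : S | s * e ∈ Ge e} := by
    intro x y
    constructor
    · intro hxy
      have hxt : x * (y * e) = (x * y) * e := (mul_assoc x y e).symm
      have htG : y * e ∈ Ge e := by
        by_cases hte : y * e = e
        · rw [hte]; exact e_mem_Ge he2
        · obtain ⟨h1, h2, v, hv1, hv2, hv3, hv4⟩ := hxy
          refine hcon _ ⟨hte, by rw [mul_assoc, he2], ⟨v * x, ?_⟩⟩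
          rw [mul_assoc, hxt]
          exact hv4
      refine ⟨?_, htG⟩
      obtain ⟨ht1, ht2, w, hw1, hw2, hw3, hw4⟩ := htG
      have hwG : w ∈ Ge e := ⟨hw1, hw2, y * e, ht1, ht2, hw4, hw3⟩
      have hxe : x * e = ((x * y) * e) * w := by
        calc x * e = x * ((y * e) * w) := by rw [hw3]
        _ = (x * (y * e)) * w := (mul_assoc _ _ _).symm
        _ = ((x * y) * e) * w := by rw [hxt]
      show x * e ∈ Ge e
      rw [hxe]
      exact Ge_mul hxy hwG
    · rintro ⟨hx, hy⟩
      show (x * y) * e ∈ Ge e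
      have : (x * y) * e = (x * e) * (y * e) := by
        calc (x * y) * e = x * (y * e) := mul_assoc _ _ _
        _ = x * (e * (y * e)) := by rw [hy.2.1]
        _ = (x * e) * (y * e) := (mul_assoc _ _ _).symm
      rw [this]
      exact Ge_mul hx hy
  have heU : e ∈ {s : S | s * e ∈ Ge e} := by
    show e * e ∈ Ge e
    rw [he2]; exact e_mem_Ge he2
  have hzU : z ∈ {s : S | s * e ∈ Ge e} := good_mem hS hU heU z
  have hz2 : z * e ∈ Ge e := hzU
  rw [(hz e).1] at hz2
  obtain ⟨_, _, v, _, _, hv3, _⟩ := hz2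
  exact hez (((hz v).1).symm.trans hv3).symm

/-- Mirror of `exists_Wr`. -/
theorem exists_Wl (hS : SemilatticeIndecomposable S)
    {z : S} (hz : ∀ x : S, z * x = z ∧ x * z = z)
    {e : S} (he2 : e * e = e) (hez : e ≠ z) :
    ∃ u, u ∈ Wl e ∧ u ∉ Ge e := by
  by_contra hcon
  push_neg at hcon
  have hU : Good {s : S | e * s ∈ Ge e} := by
    intro x y
    constructor
    · intro hxy
      have hxt : (e * x) * y = e * (x * y) := mul_assoc e x y
      have htG : e * x ∈ Ge e := by
        by_cases hte : e * x = e
        · rw [hte]; exact e_mem_Ge he2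
        · obtain ⟨h1, h2, v, hv1, hv2, hv3, hv4⟩ := hxy
          refine hcon _ ⟨hte, by rw [← mul_assoc, he2], ⟨y * v, ?_⟩⟩
          rw [← mul_assoc, hxt]
          exact hv3
      refine ⟨htG, ?_⟩
      obtain ⟨ht1, ht2, w, hw1, hw2, hw3, hw4⟩ := htG
      have hwG : w ∈ Ge e := ⟨hw1, hw2, e * x, ht1, ht2, hw4, hw3⟩
      have hye : e * y = w * (e * (x * y)) := by
        calc e * y = (w * (e * x)) * y := by rw [hw4]
        _ = w * ((e * x) * y) := mul_assoc _ _ _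
        _ = w * (e * (x * y)) := by rw [hxt]
      show e * y ∈ Ge e
      rw [hye]
      exact Ge_mul hwG hxy
    · rintro ⟨hx, hy⟩
      show e * (x * y) ∈ Ge e
      have : e * (x * y) = (e * x) * (e * y) := by
        calc e * (x * y) = (e * x) * y := (mul_assoc _ _ _).symm
        _ = ((e * x) * e) * y := by rw [hx.1]
        _ = (e * x) * (e * y) := mul_assoc _ _ _
      rw [this]
      exact Ge_mul hx hy
  have heU : e ∈ {s : S | e * s ∈ Ge e} := by
    show e * e ∈ Ge e
    rw [he2]; exact e_mem_Ge he2
  have hzU : z ∈ {s : S | e * s ∈ Ge e} := good_mem hS hU heU z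
  have hz2 : e * z ∈ Ge e := hzU
  rw [(hz e).2] at hz2
  obtain ⟨_, _, v, _, _, hv3, _⟩ := hz2
  exact hez (((hz v).1).symm.trans hv3).symm

/-- A witness that is both a right and a left witness of `e` lies in the unit group. -/
theorem WrWl_subset_Ge {e u : S} (he2 : e * e = e) (hr : u ∈ Wr e) (hl : u ∈ Wl e) :
    u ∈ Ge e := by
  obtain ⟨hune, hue, c, hcu⟩ := hr
  obtain ⟨_, heu, d, hud⟩ := hl
  have hvu : ((e * c) * e) * u = e := by
    rw [mul_assoc, heu, mul_assoc, hcu, he2]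
  have huv2 : u * ((e * d) * e) = e := by
    rw [← mul_assoc, ← mul_assoc, hue, hud, he2]
  have hve : ((e * c) * e) * e = (e * c) * e := by rw [mul_assoc, he2]
  have hev : e * ((e * c) * e) = (e * c) * e := by
    rw [← mul_assoc, ← mul_assoc, he2]
  have hev2 : e * ((e * d) * e) = (e * d) * e := by
    rw [← mul_assoc, ← mul_assoc, he2]
  have hvv2 : (e * c) * e = (e * d) * e := by
    calc (e * c) * e = ((e * c) * e) * e := hve.symm
    _ = ((e * c) * e) * (u * ((e * d) * e)) := by rw [huv2]
    _ = (((e * c) * e) * u) * ((e * d) * e) := (mul_assoc _ _ _).symm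
    _ = e * ((e * d) * e) := by rw [hvu]
    _ = (e * d) * e := hev2
  exact ⟨hue, heu, (e * c) * e, hve, hev, by rw [hvv2]; exact huv2, hvu⟩

/-- Right witnesses of distinct members of the subsemilattice are distinct. -/
theorem Wr_disjoint {Y : Set S} (hid : ∀ a ∈ Y, a * a = a)
    (hco : ∀ a ∈ Y, ∀ b ∈ Y, a * b = b * a)
    {e f u : S} (he : e ∈ Y) (hf : f ∈ Y) (hu : u ∈ Wr e) (hu' : u ∈ Wr f) : e = f := by
  obtain ⟨_, hue, c, hcu⟩ := hu
  obtain ⟨_, huf, c', hcu'⟩ := hu'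
  have h1 : u * (e * f) = u := by rw [← mul_assoc, hue, huf]
  have he' : e = e * f := by
    calc e = c * u := hcu.symm
    _ = c * (u * (e * f)) := by rw [h1]
    _ = (c * u) * (e * f) := (mul_assoc _ _ _).symm
    _ = e * (e * f) := by rw [hcu]
    _ = (e * e) * f := (mul_assoc _ _ _).symm
    _ = e * f := by rw [hid e he]
  have hf' : f = e * f := by
    calc f = c' * u := hcu'.symm
    _ = c' * (u * (e * f)) := by rw [h1]
    _ = (c' * u) * (e * f) := (mul_assoc _ _ _).symm
    _ = f * (e * f) := by rw [hcu']
    _ = (f * e) * f := (mul_assoc _ _ _).symm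
    _ = (e * f) * f := by rw [hco f hf e he]
    _ = e * (f * f) := mul_assoc _ _ _
    _ = e * f := by rw [hid f hf]
  exact he'.trans hf'.symm

/-- Left witnesses of distinct members of the subsemilattice are distinct. -/
theorem Wl_disjoint {Y : Set S} (hid : ∀ a ∈ Y, a * a = a)
    (hco : ∀ a ∈ Y, ∀ b ∈ Y, a * b = b * a)
    {e f u : S} (he : e ∈ Y) (hf : f ∈ Y) (hu : u ∈ Wl e) (hu' : u ∈ Wl f) : e = f := by
  obtain ⟨_, heu, c, huc⟩ := hu
  obtain ⟨_, hfu, c', huc'⟩ := hu'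
  have h1 : (e * f) * u = u := by rw [mul_assoc, hfu, heu]
  have he' : e = e * f := by
    calc e = u * c := huc.symm
    _ = ((e * f) * u) * c := by rw [h1]
    _ = (e * f) * (u * c) := mul_assoc _ _ _
    _ = (e * f) * e := by rw [huc]
    _ = e * (f * e) := mul_assoc _ _ _
    _ = e * (e * f) := by rw [hco f hf e he]
    _ = (e * e) * f := (mul_assoc _ _ _).symm
    _ = e * f := by rw [hid e he]
  have hf' : f = e * f := by
    calc f = u * c' := huc'.symm
    _ = ((e * f) * u) * c' := by rw [h1]
    _ = (e * f) * (u * c') := mul_assoc _ _ _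
    _ = (e * f) * f := by rw [huc']
    _ = e * (f * f) := mul_assoc _ _ _
    _ = e * f := by rw [hid f hf]
  exact he'.trans hf'.symm

/-- Right witnesses avoid the subsemilattice. -/
theorem Wr_Y {Y : Set S} (hid : ∀ a ∈ Y, a * a = a)
    (hco : ∀ a ∈ Y, ∀ b ∈ Y, a * b = b * a)
    {e u : S} (he : e ∈ Y) (hu : u ∈ Wr e) (huY : u ∈ Y) : False := by
  obtain ⟨hune, hue, c, hcu⟩ := hu
  have : e = u := by
    calc e = c * u := hcu.symm
    _ = c * (u * u) := by rw [hid u huY]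
    _ = (c * u) * u := (mul_assoc _ _ _).symm
    _ = e * u := by rw [hcu]
    _ = u * e := hco e he u huY
    _ = u := hue
  exact hune this.symm

/-- Left witnesses avoid the subsemilattice. -/
theorem Wl_Y {Y : Set S} (hid : ∀ a ∈ Y, a * a = a)
    (hco : ∀ a ∈ Y, ∀ b ∈ Y, a * b = b * a)
    {e u : S} (he : e ∈ Y) (hu : u ∈ Wl e) (huY : u ∈ Y) : False := by
  obtain ⟨hune, heu, c, huc⟩ := hu
  have : e = u := by
    calc e = u * c := huc.symm
    _ = (u * u) * c := by rw [hid u huY]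
    _ = u * (u * c) := mul_assoc _ _ _
    _ = u * e := by rw [huc]
    _ = e * u := hco u huY e he
    _ = u := heu
  exact hune this.symm

/-- The symmetry lemma: from a shared witness `w ∈ Wl e ∩ Wr f` one constructs a shared
witness `t ∈ Wl f ∩ Wr e` with extra relations. -/
theorem symm_core {e f w : S} (he2 : e * e = e) (hf2 : f * f = f)
    (hwl : w ∈ Wl e) (hwr : w ∈ Wr f) :
    ∃ t, t ∈ Wl f ∧ t ∈ Wr e ∧ w * t = e ∧ t * w = f := by
  obtain ⟨hwne, hew, y, hwy⟩ := hwl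
  obtain ⟨hwnf, hwf, x, hxw⟩ := hwr
  refine ⟨(f * y) * e, ?_⟩
  have ht_e : ((f * y) * e) * e = (f * y) * e := by rw [mul_assoc, he2]
  have ht_f : f * ((f * y) * e) = (f * y) * e := by
    rw [← mul_assoc, ← mul_assoc, hf2]
  have ht_wt : w * ((f * y) * e) = e := by
    rw [← mul_assoc, ← mul_assoc, hwf, hwy, he2]
  have hq : w * (y * w) = w := by rw [← mul_assoc, hwy, hew]
  have ht_tw : ((f * y) * e) * w = f := by
    have h1 : ((f * y) * e) * w = f * (y * w) := by
      rw [mul_assoc, hew, mul_assoc]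
    have h2 : f * (y * w) = x * (w * (y * w)) := by
      rw [← hxw, mul_assoc]
    rw [h1, h2, hq, hxw]
  have htne_f : (f * y) * e ≠ f := by
    intro h
    have he_w : e = w := by rw [← ht_wt, h, hwf]
    exact hwne he_w.symm
  have htne_e : (f * y) * e ≠ e := by
    intro h
    have hf_w : f = w := by rw [← ht_tw, h, hew]
    exact hwnf hf_w.symm
  exact ⟨⟨htne_f, ht_f, w, ht_tw⟩, ⟨htne_e, ht_e, w, ht_wt⟩, ht_wt, ht_tw⟩

/-- A fixed-point-free involution on a finset forces even cardinality. -/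
theorem even_card_fpf {α : Type*} [DecidableEq α] (f : α → α) :
    ∀ (n : ℕ) (s : Finset α), s.card ≤ n → (∀ a ∈ s, f a ∈ s) →
      (∀ a ∈ s, f (f a) = a) → (∀ a ∈ s, f a ≠ a) → Even s.card := by
  intro n
  induction n with
  | zero =>
    intro s hs _ _ _
    have : s.card = 0 := Nat.le_zero.mp hs
    simp [this]
  | succ n ih =>
    intro s hs hmap hinv hne
    rcases s.eq_empty_or_nonempty with rfl | ⟨a, ha⟩
    · simp
    · have hfa : f a ∈ s := hmap a ha
      have hfane : f a ≠ a := hne a ha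
      have hfa' : f a ∈ s.erase a := Finset.mem_erase.mpr ⟨hfane, hfa⟩
      have h2 : 2 ≤ s.card := Finset.one_lt_card.mpr ⟨a, ha, f a, hfa, hfane.symm⟩
      have hcard : ((s.erase a).erase (f a)).card + 2 = s.card := by
        rw [Finset.card_erase_of_mem hfa', Finset.card_erase_of_mem ha]
        omega
      have hmem' : ∀ b ∈ (s.erase a).erase (f a), b ∈ s ∧ b ≠ a ∧ b ≠ f a := by
        intro b hb
        rw [Finset.mem_erase, Finset.mem_erase] at hb
        exact ⟨hb.2.2, hb.2.1, hb.1⟩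
      have hmap' : ∀ b ∈ (s.erase a).erase (f a), f b ∈ (s.erase a).erase (f a) := by
        intro b hb
        obtain ⟨hbs, hba, hbfa⟩ := hmem' b hb
        rw [Finset.mem_erase, Finset.mem_erase]
        refine ⟨?_, ?_, hmap b hbs⟩
        · intro h
          apply hba
          rw [← hinv b hbs, h, hinv a ha]
        · intro h
          apply hbfa
          rw [← hinv b hbs, h]
      have hinv' : ∀ b ∈ (s.erase a).erase (f a), f (f b) = b :=
        fun b hb => hinv b (hmem' b hb).1
      have hne' : ∀ b ∈ (s.erase a).erase (f a), f b ≠ b :=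
        fun b hb => hne b (hmem' b hb).1
      have hev : Even ((s.erase a).erase (f a)).card :=
        ih _ (by omega) hmap' hinv' hne'
      obtain ⟨m, hm⟩ := hev
      exact ⟨m + 1, by omega⟩

/-- The main counting bound, assuming the zero belongs to the subsemilattice. -/
theorem main_bound {S : Type u} [Semigroup S] [Fintype S]
    (hS : SemilatticeIndecomposable S)
    (z : S) (hz : ∀ x : S, z * x = z ∧ x * z = z)
    (Y : Set S) (hzY : z ∈ Y)
    (hcl : ∀ a ∈ Y, ∀ b ∈ Y, a * b ∈ Y)
    (hid : ∀ a ∈ Y, a * a = a)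
    (hco : ∀ a ∈ Y, ∀ b ∈ Y, a * b = b * a) :
    Y.ncard ≤ 2 * ((Fintype.card S - 1) / 4) + 1 := by
  classical
  have hYfin : Y.Finite := Set.toFinite _
  have hVfin : (Y \ {z} : Set S).Finite := Set.toFinite _
  have hXfin : (Yᶜ : Set S).Finite := Set.toFinite _
  have hkpos : 0 < Y.ncard := (Set.ncard_pos hYfin).mpr ⟨z, hzY⟩
  have hVcard : (Y \ {z} : Set S).ncard = Y.ncard - 1 :=
    Set.ncard_diff_singleton_of_mem hzY
  have hcompl : Y.ncard + (Yᶜ : Set S).ncard = Fintype.card S := by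
    rw [Set.ncard_add_ncard_compl, Nat.card_eq_fintype_card]
  have hVY : ∀ e ∈ (Y \ {z} : Set S), e ∈ Y := fun e he => he.1
  have hVz : ∀ e ∈ (Y \ {z} : Set S), e ≠ z := fun e he => by simpa using he.2
  have hWrex : ∀ e, e ∈ (Y \ {z} : Set S) → ∃ u, u ∈ Wr e ∧ u ∉ Ge e :=
    fun e he => exists_Wr hS hz (hid e (hVY e he)) (hVz e he)
  have hWlex : ∀ e, e ∈ (Y \ {z} : Set S) → ∃ u, u ∈ Wl e ∧ u ∉ Ge e :=
    fun e he => exists_Wl hS hz (hid e (hVY e he)) (hVz e he)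
  choose! a ha haG using hWrex
  choose! b hb hbG using hWlex
  have hainj : Set.InjOn a (Y \ {z}) := by
    intro e he f hf hef
    exact Wr_disjoint hid hco (hVY e he) (hVY f hf) (ha e he) (hef ▸ ha f hf)
  have haX : ∀ e ∈ (Y \ {z} : Set S), a e ∈ (Yᶜ : Set S) :=
    fun e he hmem => Wr_Y hid hco (hVY e he) (ha e he) hmem
  have h1 : Y.ncard - 1 ≤ (Yᶜ : Set S).ncard := by
    calc Y.ncard - 1 = (Y \ {z} : Set S).ncard := hVcard.symm
    _ = (a '' (Y \ {z})).ncard := (Set.ncard_image_of_injOn hainj).symm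
    _ ≤ (Yᶜ : Set S).ncard := Set.ncard_le_ncard
        (by rintro _ ⟨e, he, rfl⟩; exact haX e he) hXfin
  have hevenkill : Even Y.ncard → (Yᶜ : Set S).ncard ≤ Y.ncard → False := by
    intro hkeven hXle
    have hPfin : (⋃ e ∈ (Y \ {z} : Set S), Wr e).Finite := Set.toFinite _
    have hPX : (⋃ e ∈ (Y \ {z} : Set S), Wr e) ⊆ (Yᶜ : Set S) := by
      intro u hu
      simp only [Set.mem_iUnion] at hu
      obtain ⟨e, he, hu⟩ := hu
      exact fun hmem => Wr_Y hid hco (hVY e he) hu hmem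
    have hPcard : Y.ncard - 1 ≤ (⋃ e ∈ (Y \ {z} : Set S), Wr e).ncard := by
      calc Y.ncard - 1 = (a '' (Y \ {z})).ncard := by
            rw [Set.ncard_image_of_injOn hainj, hVcard]
      _ ≤ _ := Set.ncard_le_ncard
          (by rintro _ ⟨e, he, rfl⟩
              simp only [Set.mem_iUnion]
              exact ⟨e, he, ha e he⟩) hPfin
    by_cases hI : ∃ e₀ ∈ (Y \ {z} : Set S), ∀ g ∈ (Y \ {z} : Set S), b e₀ ∉ Wr g
    · -- CASE I : an isolated vertex
      obtain ⟨e₀, he₀, hxP⟩ := hI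
      obtain ⟨hxne, hex, y₀, hxy⟩ := hb e₀ he₀
      obtain ⟨hx'ne, hx'e, xh, hxx'⟩ := ha e₀ he₀
      have hxi1 : xh * ((a e₀) * (b e₀)) = b e₀ := by
        rw [← mul_assoc, hxx', hex]
      have hxi2 : ((a e₀) * (b e₀)) * y₀ = a e₀ := by
        rw [mul_assoc, hxy, hx'e]
      have hxY : b e₀ ∉ Y := fun h => Wl_Y hid hco (hVY e₀ he₀) (hb e₀ he₀) h
      by_cases hxiY : (a e₀) * (b e₀) ∈ Y
      · have hxiz : (a e₀) * (b e₀) ≠ z := by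
          intro h
          have hx'z : a e₀ = z := by rw [← hxi2, h, (hz y₀).1]
          have : e₀ = z := by rw [← hxx', hx'z, (hz xh).2]
          exact hVz e₀ he₀ this
        have hxiV : (a e₀) * (b e₀) ∈ (Y \ {z} : Set S) := ⟨hxiY, by simpa using hxiz⟩
        apply hxP _ hxiV
        refine ⟨fun h => hxY (h ▸ hxiY), ?_, ⟨a e₀, rfl⟩⟩
        calc (b e₀) * ((a e₀) * (b e₀))
            = (xh * ((a e₀) * (b e₀))) * ((a e₀) * (b e₀)) := by rw [hxi1]
        _ = xh * (((a e₀) * (b e₀)) * ((a e₀) * (b e₀))) := mul_assoc _ _ _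
        _ = xh * ((a e₀) * (b e₀)) := by rw [hid _ hxiY]
        _ = b e₀ := hxi1
      · by_cases hxiP : (a e₀) * (b e₀) ∈ ⋃ e ∈ (Y \ {z} : Set S), Wr e
        · simp only [Set.mem_iUnion] at hxiP
          obtain ⟨g, hg, hxig⟩ := hxiP
          obtain ⟨hxineg, hxigg, ch, hchxi⟩ := hxig
          apply hxP g hg
          refine ⟨fun h => hxY (h ▸ hVY g hg), ?_, ⟨ch * (a e₀), ?_⟩⟩
          · calc (b e₀) * g = (xh * ((a e₀) * (b e₀))) * g := by rw [hxi1]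
            _ = xh * (((a e₀) * (b e₀)) * g) := mul_assoc _ _ _
            _ = xh * ((a e₀) * (b e₀)) := by rw [hxigg]
            _ = b e₀ := hxi1
          · calc (ch * (a e₀)) * (b e₀) = ch * ((a e₀) * (b e₀)) := mul_assoc _ _ _
            _ = g := hchxi
        · have hxX : b e₀ ∈ (Yᶜ : Set S) := hxY
          have hxPn : b e₀ ∉ ⋃ e ∈ (Y \ {z} : Set S), Wr e := by
            simp only [Set.mem_iUnion]
            rintro ⟨g, hg, hxg⟩
            exact hxP g hg hxg
          have hdiffle : ((Yᶜ : Set S) \ (⋃ e ∈ (Y \ {z} : Set S), Wr e)).ncard ≤ 1 := by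
            rw [Set.ncard_diff hPX hPfin]
            omega
          have hxieq : (a e₀) * (b e₀) = b e₀ := by
            by_contra hne
            have hsub : ({(a e₀) * (b e₀), b e₀} : Set S) ⊆
                (Yᶜ : Set S) \ (⋃ e ∈ (Y \ {z} : Set S), Wr e) := by
              intro u hu
              simp only [Set.mem_insert_iff, Set.mem_singleton_iff] at hu
              rcases hu with rfl | rfl
              · exact ⟨hxiY, hxiP⟩
              · exact ⟨hxX, hxPn⟩
            have hle2 := Set.ncard_le_ncard hsub (Set.toFinite _)
            rw [Set.ncard_pair hne] at hle2
            omega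
          exact hx'ne (by rw [← hxi2, hxieq, hxy])
    · -- CASE II : every vertex has a neighbour
      push_neg at hI
      have hedge : ∀ e, e ∈ (Y \ {z} : Set S) →
          ∃ f, (f ∈ (Y \ {z} : Set S) ∧ e ≠ f) ∧ ∃ w, w ∈ Wl e ∧ w ∈ Wr f := by
        intro e he
        obtain ⟨g, hg, hbg⟩ := hI e he
        refine ⟨g, ⟨hg, ?_⟩, b e, hb e he, hbg⟩
        intro hEq
        exact hbG e he (WrWl_subset_Ge (hid e (hVY e he)) (hEq ▸ hbg) (hb e he))
      have hUniq : ∀ e f f', e ∈ (Y \ {z} : Set S) → f ∈ (Y \ {z} : Set S) →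
          f' ∈ (Y \ {z} : Set S) → e ≠ f → e ≠ f' →
          (∃ w, w ∈ Wl e ∧ w ∈ Wr f) → (∃ w', w' ∈ Wl e ∧ w' ∈ Wr f') → f = f' := by
        intro e f f' he hf hf' hef hef' hw hw'
        obtain ⟨w, hwl, hwr⟩ := hw
        obtain ⟨w', hwl', hwr'⟩ := hw'
        by_contra hff
        obtain ⟨t, htlf, htre, hwt, htw⟩ :=
          symm_core (hid e (hVY e he)) (hid f (hVY f hf)) hwl hwr
        obtain ⟨t', htlf', htre', hwt', htw'⟩ :=
          symm_core (hid e (hVY e he)) (hid f' (hVY f' hf')) hwl' hwr'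
        have htt : t ≠ t' := by
          intro h
          exact hff (Wl_disjoint hid hco (hVY f hf) (hVY f' hf') htlf (h ▸ htlf'))
        by_cases hsing : ∀ c ∈ Wr f', c = w'
        · have hww' : w' * f' = w' := hwr'.2.1
          have hew' : e * w' = w' := hwl'.2.1
          have hc_cf' : (t * w') * f' = t * w' := by rw [mul_assoc, hww']
          have hdiv : (t' * w) * (t * w') = f' := by
            calc (t' * w) * (t * w') = t' * (w * (t * w')) := mul_assoc _ _ _
            _ = t' * ((w * t) * w') := by rw [← mul_assoc w t w']
            _ = t' * (e * w') := by rw [hwt]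
            _ = t' * w' := by rw [hew']
            _ = f' := htw'
          have hct' : (t * w') * t' = t := by
            calc (t * w') * t' = t * (w' * t') := mul_assoc _ _ _
            _ = t * e := by rw [hwt']
            _ = t := htre.2.1
          have hcf' : t * w' ≠ f' := by
            intro h
            apply htt
            calc t = (t * w') * t' := hct'.symm
            _ = f' * t' := by rw [h]
            _ = t' := htlf'.2.1
          have hcmem : t * w' ∈ Wr f' := ⟨hcf', hc_cf', t' * w, hdiv⟩
          have hte : t = e := by
            calc t = (t * w') * t' := hct'.symm
            _ = w' * t' := by rw [hsing _ hcmem]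
            _ = e := hwt'
          exact htre.1 hte
        · push_neg at hsing
          obtain ⟨c', hc'mem, hc'ne⟩ := hsing
          have hA : 2 ≤ (Wr e).ncard := by
            have hsub : ({t, t'} : Set S) ⊆ Wr e := by
              intro u hu
              simp only [Set.mem_insert_iff, Set.mem_singleton_iff] at hu
              rcases hu with rfl | rfl
              · exact htre
              · exact htre'
            calc 2 = ({t, t'} : Set S).ncard := (Set.ncard_pair htt).symm
            _ ≤ _ := Set.ncard_le_ncard hsub (Set.toFinite _)
          have hB : 2 ≤ (Wr f').ncard := by
            have hsub : ({c', w'} : Set S) ⊆ Wr f' := by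
              intro u hu
              simp only [Set.mem_insert_iff, Set.mem_singleton_iff] at hu
              rcases hu with rfl | rfl
              · exact hc'mem
              · exact hwr'
            calc 2 = ({c', w'} : Set S).ncard := (Set.ncard_pair hc'ne).symm
            _ ≤ _ := Set.ncard_le_ncard hsub (Set.toFinite _)
          have hD3 : (a '' ((Y \ {z}) \ {e, f'})).ncard
              = ((Y \ {z} : Set S) \ {e, f'}).ncard :=
            Set.ncard_image_of_injOn (hainj.mono Set.diff_subset)
          have hpairV : ({e, f'} : Set S) ⊆ (Y \ {z} : Set S) := by
            intro u hu
            simp only [Set.mem_insert_iff, Set.mem_singleton_iff] at hu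
            rcases hu with rfl | rfl
            · exact he
            · exact hf'
          have hV2 : ((Y \ {z} : Set S) \ {e, f'}).ncard
              = (Y \ {z} : Set S).ncard - 2 := by
            rw [Set.ncard_diff hpairV (Set.toFinite _), Set.ncard_pair hef']
          have hVge2 : 2 ≤ (Y \ {z} : Set S).ncard := by
            calc 2 = ({e, f'} : Set S).ncard := (Set.ncard_pair hef').symm
            _ ≤ _ := Set.ncard_le_ncard hpairV hVfin
          have hd1 : Disjoint (Wr e) (Wr f' ∪ a '' ((Y \ {z}) \ {e, f'})) := by
            rw [Set.disjoint_union_right]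
            constructor
            · rw [Set.disjoint_left]
              intro u hu hu'
              exact hef' (Wr_disjoint hid hco (hVY e he) (hVY f' hf') hu hu')
            · rw [Set.disjoint_left]
              rintro u hu ⟨g, hg, rfl⟩
              have hEq : e = g :=
                Wr_disjoint hid hco (hVY e he) (hVY g hg.1) hu (ha g hg.1)
              exact hg.2 (Set.mem_insert_iff.mpr (Or.inl hEq.symm))
          have hd2 : Disjoint (Wr f') (a '' ((Y \ {z}) \ {e, f'})) := by
            rw [Set.disjoint_left]
            rintro u hu ⟨g, hg, rfl⟩
            have hEq : f' = g :=
              Wr_disjoint hid hco (hVY f' hf') (hVY g hg.1) hu (ha g hg.1)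
            exact hg.2 (by
              simp only [Set.mem_insert_iff, Set.mem_singleton_iff]
              exact Or.inr hEq.symm)
          have hsubX : Wr e ∪ (Wr f' ∪ a '' ((Y \ {z}) \ {e, f'})) ⊆ (Yᶜ : Set S) := by
            rintro u (hu | hu | ⟨g, hg, rfl⟩)
            · exact fun hm => Wr_Y hid hco (hVY e he) hu hm
            · exact fun hm => Wr_Y hid hco (hVY f' hf') hu hm
            · exact haX g hg.1
          have hcards : (Wr e).ncard + ((Wr f').ncard
              + (a '' ((Y \ {z}) \ {e, f'})).ncard) ≤ (Yᶜ : Set S).ncard := by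
            rw [← Set.ncard_union_eq hd2 (Set.toFinite _) (Set.toFinite _),
              ← Set.ncard_union_eq hd1 (Set.toFinite _) (Set.toFinite _)]
            exact Set.ncard_le_ncard hsubX hXfin
          rw [hD3, hV2] at hcards
          omega
      choose! nu hnu hw hw1 hw2 using hedge
      have hinv : ∀ e, e ∈ (Y \ {z} : Set S) → nu (nu e) = e := by
        intro e he
        have h1 : nu e ∈ (Y \ {z} : Set S) := (hnu e he).1
        obtain ⟨t, htl, htr, _, _⟩ :=
          symm_core (hid e (hVY e he)) (hid (nu e) (hVY _ h1)) (hw1 e he) (hw2 e he)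
        exact hUniq (nu e) (nu (nu e)) e h1 (hnu _ h1).1 he ((hnu _ h1).2)
          (Ne.symm ((hnu e he).2)) ⟨hw (nu e), hw1 _ h1, hw2 _ h1⟩ ⟨t, htl, htr⟩
      have hVFcard : (Y \ {z} : Set S).ncard = hVfin.toFinset.card :=
        Set.ncard_eq_toFinset_card _ hVfin
      have hevenV : Even hVfin.toFinset.card := by
        apply even_card_fpf nu hVfin.toFinset.card hVfin.toFinset le_rfl
        · intro a' ha'
          rw [Set.Finite.mem_toFinset] at ha' ⊢
          exact (hnu a' ha').1
        · intro a' ha'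
          rw [Set.Finite.mem_toFinset] at ha'
          exact hinv a' ha'
        · intro a' ha'
          rw [Set.Finite.mem_toFinset] at ha'
          exact Ne.symm ((hnu a' ha').2)
      obtain ⟨m1, hm1⟩ := hkeven
      obtain ⟨m2, hm2⟩ := hevenV
      rw [← hVFcard, hVcard] at hm2
      omega
  have h2 : Even Y.ncard → 2 * Y.ncard + 1 ≤ Fintype.card S := by
    intro hke
    by_contra hcon
    push_neg at hcon
    exact hevenkill hke (by omega)
  rcases Nat.even_or_odd Y.ncard with hke | hko
  · have hn2 := h2 hke
    obtain ⟨m, hm⟩ := hke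
    have hmdiv : m ≤ (Fintype.card S - 1) / 4 :=
      (Nat.le_div_iff_mul_le (by norm_num)).mpr (by omega)
    omega
  · obtain ⟨m, hm⟩ := hko
    have hmdiv : m ≤ (Fintype.card S - 1) / 4 :=
      (Nat.le_div_iff_mul_le (by norm_num)).mpr (by omega)
    omega

end Stmt10Aux

/-- If `S` is a finite semilattice indecomposable semigroup with a zero and `Y` is a
subsemilattice of `S`, then `|Y| ≤ 2⌊(|S|-1)/4⌋ + 1`. -/
theorem stmt_10 {S : Type u} [Semigroup S] [Fintype S]
    (hS : SemilatticeIndecomposable S)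
    (z : S) (hz : ∀ x : S, z * x = z ∧ x * z = z)
    (Y : Set S) (hY : IsSubsemilattice Y) :
    Y.ncard ≤ 2 * ((Fintype.card S - 1) / 4) + 1 := by
  obtain ⟨hcl, hid, hco⟩ := hY
  have hzz : z * z = z := (hz z).1
  have hcl' : ∀ a ∈ Y ∪ {z}, ∀ b ∈ Y ∪ {z}, a * b ∈ Y ∪ {z} := by
    intro a ha b hb
    rcases hb with hb | hb
    · rcases ha with ha | ha
      · exact Or.inl (hcl a ha b hb)
      · rw [Set.mem_singleton_iff] at ha
        subst ha
        exact Or.inr (by rw [Set.mem_singleton_iff, (hz b).1])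
    · rw [Set.mem_singleton_iff] at hb
      subst hb
      exact Or.inr (by rw [Set.mem_singleton_iff, (hz a).2])
  have hid' : ∀ a ∈ Y ∪ {z}, a * a = a := by
    intro a ha
    rcases ha with ha | ha
    · exact hid a ha
    · rw [Set.mem_singleton_iff] at ha
      subst ha
      exact hzz
  have hco' : ∀ a ∈ Y ∪ {z}, ∀ b ∈ Y ∪ {z}, a * b = b * a := by
    intro a ha b hb
    rcases ha with ha | ha
    · rcases hb with hb | hb
      · exact hco a ha b hb
      · rw [Set.mem_singleton_iff] at hb
        subst hb
        rw [(hz a).2, (hz a).1]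
    · rw [Set.mem_singleton_iff] at ha
      subst ha
      rw [(hz b).1, (hz b).2]
  have hmain := Stmt10Aux.main_bound hS z hz (Y ∪ {z})
    (Set.mem_union_right _ rfl) hcl' hid' hco'
  have hle : Y.ncard ≤ (Y ∪ {z}).ncard :=
    Set.ncard_le_ncard Set.subset_union_left (Set.toFinite _)
  omega
end

section
/- If Y is a finite semilattice with n elements, then the semigroup algebra ℂ[Y] is isomorphic as a ℂ-algebra to the direct product of n copies of ℂ; in particular ℂ[Y] is semisimple. -/
/-- If `Y` is a finite semilattice (a finite commutative idempotent semigroup) with `n`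
elements, then the semigroup algebra `ℂ[Y]` is isomorphic as a ℂ-algebra (an additive,
multiplicative and ℂ-linear isomorphism) to the product of `n` copies of `ℂ`; in
particular `ℂ[Y]` is semisimple. -/
theorem stmt_19 {Y : Type} [Semigroup Y] [Fintype Y]
    (hcomm : ∀ a b : Y, a * b = b * a) (hidem : ∀ a : Y, a * a = a)
    {n : ℕ} (hn : Fintype.card Y = n) :
    ∃ e : MonoidAlgebra ℂ Y ≃+* (Fin n → ℂ),
      ∀ (c : ℂ) (x : MonoidAlgebra ℂ Y), e (c • x) = c • e x := by
  classical
  -- the semilattice partial order : a ≤ b ↔ a * b = a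
  letI : PartialOrder Y :=
    { le := fun a b => a * b = a
      le_refl := hidem
      le_trans := fun a b c hab hbc => by
        show a * c = a
        calc a * c = (a * b) * c := by rw [hab]
        _ = a * (b * c) := mul_assoc a b c
        _ = a * b := by rw [hbc]
        _ = a := hab
      le_antisymm := fun a b hab hba => by
        calc a = a * b := hab.symm
        _ = b * a := hcomm a b
        _ = b := hba }
  letI : CommSemigroup Y := { mul_comm := hcomm }
  have hmul : ∀ y a b : Y, (y * (a * b) = y) ↔ (y * a = y ∧ y * b = y) := by
    intro y a b
    constructor
    · intro h
      have ha : a * b * a = a * b := by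
        rw [mul_comm (a * b) a, ← mul_assoc, hidem]
      have hb : a * b * b = a * b := by
        rw [mul_assoc, hidem]
      constructor
      · calc y * a = y * (a * b) * a := by rw [h]
        _ = y * (a * b * a) := mul_assoc _ _ _
        _ = y * (a * b) := by rw [ha]
        _ = y := h
      · calc y * b = y * (a * b) * b := by rw [h]
        _ = y * (a * b * b) := mul_assoc _ _ _
        _ = y * (a * b) := by rw [hb]
        _ = y := h
    · rintro ⟨h1, h2⟩
      calc y * (a * b) = (y * a) * b := (mul_assoc y a b).symm
      _ = y * b := by rw [h1]
      _ = y := h2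
  -- the character map
  let ψ : Y →ₙ* (Y → ℂ) :=
    { toFun := fun a y => if y * a = y then 1 else 0
      map_mul' := fun a b => by
        funext y
        simp only [Pi.mul_apply]
        by_cases h : y * (a * b) = y
        · obtain ⟨h1, h2⟩ := (hmul y a b).1 h
          simp [h, h1, h2]
        · rw [if_neg h]
          rcases not_and_or.1 (fun hh => h ((hmul y a b).2 hh)) with h1 | h1 <;>
            simp [h1] }
  let E : MonoidAlgebra ℂ Y →ₙₐ[ℂ] (Y → ℂ) := MonoidAlgebra.liftMagma ℂ ψ
  have hEapp : ∀ (f : MonoidAlgebra ℂ Y) (y : Y),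
      E f y = ∑ x ∈ f.coeff.support, f.coeff x * (if y * x = y then 1 else 0) := by
    intro f y
    show (f.coeff.sum fun m t => t • ψ m) y = _
    rw [Finsupp.sum]
    simp [ψ, mul_comm]
  have hinj : Function.Injective E := by
    rw [injective_iff_map_eq_zero]
    intro f hf
    by_contra hne
    have hsupp : f.coeff.support.Nonempty := Finsupp.support_nonempty_iff.2 (by simpa using hne)
    obtain ⟨y, hy, hymax⟩ : ∃ y ∈ f.coeff.support, ∀ x ∈ f.coeff.support, ¬ y < x := by
      obtain ⟨y, hy⟩ := Finset.exists_maximal hsupp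
      exact ⟨y, hy.1, fun x hx hlt => lt_irrefl y (lt_of_lt_of_le hlt (hy.2 hx hlt.le))⟩
    have : E f y = f.coeff y := by
      rw [hEapp]
      rw [Finset.sum_eq_single y]
      · simp [hidem y]
      · intro x hx hxy
        rw [if_neg, mul_zero]
        intro hle
        exact hymax x hx (lt_of_le_of_ne hle (fun h => hxy h.symm))
      · intro h; exact absurd hy h
    rw [hf] at this
    exact Finsupp.mem_support_iff.1 hy this.symm
  -- E as a linear map
  let L : MonoidAlgebra ℂ Y →ₗ[ℂ] (Y → ℂ) :=
    { toFun := E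
      map_add' := E.map_add
      map_smul' := E.map_smul }
  have hfr : Module.finrank ℂ (MonoidAlgebra ℂ Y) = Module.finrank ℂ (Y → ℂ) := by
    rw [(MonoidAlgebra.coeffLinearEquiv ℂ).finrank_eq]
    rw [Module.finrank_finsupp_self, Module.finrank_pi]
  haveI : FiniteDimensional ℂ (MonoidAlgebra ℂ Y) :=
    Module.Finite.equiv (MonoidAlgebra.coeffLinearEquiv ℂ).symm
  have hsurj : Function.Surjective E :=
    (LinearMap.injective_iff_surjective_of_finrank_eq_finrank (f := L) hfr).1 hinj
  let σ : Y ≃ Fin n := Fintype.equivFinOfCardEq hn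
  let e₂ : (Y → ℂ) ≃+* (Fin n → ℂ) :=
    { Equiv.piCongrLeft' (fun _ => ℂ) σ with
      map_mul' := fun f g => rfl
      map_add' := fun f g => rfl }
  let e₁ : MonoidAlgebra ℂ Y ≃+* (Y → ℂ) := RingEquiv.ofBijective E ⟨hinj, hsurj⟩
  refine ⟨e₁.trans e₂, fun c x => ?_⟩
  have h1 : e₁ (c • x) = c • e₁ x := E.map_smul c x
  show e₂ (e₁ (c • x)) = c • e₂ (e₁ x)
  rw [h1]
  rfl
end
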